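/- Let Δ ⊆ ℝ^d be a nonempty convex compact set, R : Δ → ℝ convex and L-Lipschitz for ‖·‖₂, and R̄(δ) = inf_{δ'∈Δ}{R(δ') + L‖δ−δ'‖₂}. Let η > 0 and λ₀ be a subgradient of R̄ at 0 (with 0 ∈ Δ). Given arbitrary sequences (δ_t)_{t≥1} in Δ and step sizes (η_t)_{t≥1} with 0 ≤ η_t ≤ η for all t, define recursively: γ_t is any maximizer of γ ↦ ⟨λ_t, γ⟩ − R̄(γ) over Δ_{δ_t}, and λ_{t+1} = λ_t − η_t(γ_t − δ_t). Then ‖λ_t‖₂ ≤ L + 2η·diam(Δ) for all t. -/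

import Mathlib

open Metric Set
open scoped RealInnerProductSpace

set_option maxHeartbeats 2000000 in
/-- boundedness of the dual iterates with time-varying step sizes:
with `λ₀` a subgradient of the extension `R̄` at `0 ∈ Δ` and step sizes
`0 ≤ η_t ≤ η`, the iterates `λ_{t+1} = λ_t − η_t(γ_t − δ_t)` satisfy
`‖λ_t‖ ≤ L + 2η·diam(Δ)` for all `t`. -/
theorem stmt4 {d : ℕ} (Δ : Set (EuclideanSpace ℝ (Fin d)))
    (hΔne : Δ.Nonempty) (hΔconv : Convex ℝ Δ) (hΔcomp : IsCompact Δ)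
    (h0Δ : (0 : EuclideanSpace ℝ (Fin d)) ∈ Δ)
    (L : NNReal) (R : EuclideanSpace ℝ (Fin d) → ℝ)
    (hRconv : ConvexOn ℝ Δ R) (hRlip : LipschitzOnWith L R Δ)
    (Rbar : EuclideanSpace ℝ (Fin d) → ℝ)
    (hRbar : ∀ δ, Rbar δ =
      ⨅ δ' : Δ, (R δ' + (L : ℝ) * ‖δ - (δ' : EuclideanSpace ℝ (Fin d))‖))
    (η : ℝ) (hη : 0 < η)
    (ηt : ℕ → ℝ) (hηt : ∀ t, 0 ≤ ηt t ∧ ηt t ≤ η)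
    (lam γ δ : ℕ → EuclideanSpace ℝ (Fin d))
    (hδ : ∀ t, δ t ∈ Δ)
    (hlam0 : ∀ y, Rbar 0 + ⟪lam 0, y - 0⟫ ≤ Rbar y)
    (hγmem : ∀ t, γ t ∈ closedBall (δ t) (diam Δ))
    (hγmax : ∀ t, ∀ g ∈ closedBall (δ t) (diam Δ),
      ⟪lam t, g⟫ - Rbar g ≤ ⟪lam t, γ t⟫ - Rbar (γ t))
    (hrec : ∀ t, lam (t + 1) = lam t - ηt t • (γ t - δ t)) :
    ∀ t, ‖lam t‖ ≤ (L : ℝ) + 2 * η * diam Δ := by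
  have hLnn : (0:ℝ) ≤ (L:ℝ) := L.coe_nonneg
  set D : ℝ := diam Δ with hDdef
  have hD0 : 0 ≤ D := diam_nonneg
  haveI hne : Nonempty Δ := hΔne.to_subtype
  -- boundedness below of the infimand
  have hbdd : ∀ y : EuclideanSpace ℝ (Fin d),
      BddBelow (Set.range fun δ' : Δ => R δ' + (L:ℝ) * ‖y - (δ' : EuclideanSpace ℝ (Fin d))‖) := by
    intro y
    refine ⟨R 0 - (L:ℝ) * D, ?_⟩
    rintro _ ⟨δ', rfl⟩
    dsimp only
    have h1 : dist (R δ') (R 0) ≤ (L:ℝ) * dist (δ' : EuclideanSpace ℝ (Fin d)) 0 :=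
      hRlip.dist_le_mul _ δ'.2 _ h0Δ
    have h2 : dist (δ' : EuclideanSpace ℝ (Fin d)) 0 ≤ D :=
      dist_le_diam_of_mem hΔcomp.isBounded δ'.2 h0Δ
    have h3 : |R δ' - R 0| ≤ (L:ℝ) * D := by
      rw [Real.dist_eq] at h1
      exact h1.trans (by nlinarith)
    have h4 : R 0 - (L:ℝ) * D ≤ R δ' := by
      have := abs_le.1 h3
      linarith [this.1]
    have h5 : 0 ≤ (L:ℝ) * ‖y - (δ' : EuclideanSpace ℝ (Fin d))‖ := by positivity
    linarith
  -- Rbar is L-Lipschitz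
  have hRbarLip : ∀ x y : EuclideanSpace ℝ (Fin d), Rbar x ≤ Rbar y + (L:ℝ) * ‖x - y‖ := by
    intro x y
    rw [hRbar x, hRbar y]
    have h1 : (⨅ δ' : Δ, (R δ' + (L:ℝ) * ‖x - (δ' : EuclideanSpace ℝ (Fin d))‖))
        - (L:ℝ) * ‖x - y‖ ≤ ⨅ δ' : Δ, (R δ' + (L:ℝ) * ‖y - (δ' : EuclideanSpace ℝ (Fin d))‖) := by
      apply le_ciInf
      intro δ'
      have h2 : (⨅ δ' : Δ, (R δ' + (L:ℝ) * ‖x - (δ' : EuclideanSpace ℝ (Fin d))‖))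
          ≤ R δ' + (L:ℝ) * ‖x - (δ' : EuclideanSpace ℝ (Fin d))‖ := ciInf_le (hbdd x) δ'
      have h3 : ‖x - (δ' : EuclideanSpace ℝ (Fin d))‖ ≤ ‖x - y‖ + ‖y - (δ' : EuclideanSpace ℝ (Fin d))‖ :=
        norm_sub_le_norm_sub_add_norm_sub x y δ'
      nlinarith
    linarith
  -- key inequality from maximality and Lipschitzness
  have KI : ∀ t, ∀ g ∈ closedBall (δ t) D, ⟪lam t, g - γ t⟫ ≤ (L:ℝ) * ‖g - γ t‖ := by
    intro t g hg
    have h1 := hγmax t g hg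
    have h2 := hRbarLip g (γ t)
    rw [inner_sub_right]
    linarith
  -- base bound
  have hN0 : ‖lam 0‖ ≤ (L:ℝ) := by
    have h1 := hlam0 (lam 0)
    have h2 := hRbarLip (lam 0) 0
    rw [sub_zero] at h1 h2
    rw [real_inner_self_eq_norm_sq] at h1
    nlinarith [norm_nonneg (lam 0)]
  -- main induction
  intro t
  induction t with
  | zero => nlinarith [hN0]
  | succ t ih =>
    have hvD : ‖γ t - δ t‖ ≤ D := by
      have := hγmem t
      rw [mem_closedBall, dist_eq_norm] at this
      exact this
    have hη1 : 0 ≤ ηt t := (hηt t).1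
    have hη2 : ηt t ≤ η := (hηt t).2
    have hrecn : ‖lam (t+1)‖ = ‖lam t - ηt t • (γ t - δ t)‖ := by rw [hrec t]
    have hsq : ‖lam (t+1)‖ ^ 2
        = ‖lam t‖ ^ 2 - 2 * ηt t * ⟪lam t, γ t - δ t⟫ + ηt t ^ 2 * ‖γ t - δ t‖ ^ 2 := by
      rw [hrecn, norm_sub_sq_real, real_inner_smul_right, norm_smul, Real.norm_eq_abs,
        abs_of_nonneg hη1]
      ring
    by_cases hcase : ‖lam t‖ ≤ Real.sqrt ((L:ℝ)^2 + (η*D)^2/4)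
    · -- small case: norm grows by at most ηD
      have h1 : ‖lam (t+1)‖ ≤ ‖lam t‖ + ‖ηt t • (γ t - δ t)‖ := by
        rw [hrecn]; exact norm_sub_le _ _
      have h2 : ‖ηt t • (γ t - δ t)‖ ≤ η * D := by
        rw [norm_smul, Real.norm_eq_abs, abs_of_nonneg hη1]
        exact mul_le_mul hη2 hvD (norm_nonneg _) hη.le
      have h3 : Real.sqrt ((L:ℝ)^2 + (η*D)^2/4) ≤ (L:ℝ) + η*D/2 := by
        have h4 : (L:ℝ)^2 + (η*D)^2/4 ≤ ((L:ℝ) + η*D/2)^2 := by nlinarith [mul_nonneg hη.le hD0]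
        calc Real.sqrt ((L:ℝ)^2 + (η*D)^2/4) ≤ Real.sqrt (((L:ℝ) + η*D/2)^2) :=
              Real.sqrt_le_sqrt h4
          _ = (L:ℝ) + η*D/2 := Real.sqrt_sq (by nlinarith [mul_nonneg hη.le hD0])
      nlinarith [mul_nonneg hη.le hD0]
    · push_neg at hcase
      set T : ℝ := Real.sqrt ((L:ℝ)^2 + (η*D)^2/4) with hTdef
      have hT0 : 0 ≤ T := Real.sqrt_nonneg _
      have hTsq : T^2 = (L:ℝ)^2 + (η*D)^2/4 := Real.sq_sqrt (by positivity)
      have hLT : (L:ℝ) ≤ T := by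
        rw [hTdef]
        calc (L:ℝ) = Real.sqrt ((L:ℝ)^2) := (Real.sqrt_sq hLnn).symm
          _ ≤ _ := Real.sqrt_le_sqrt (le_add_of_nonneg_right (by positivity))
      have hLN : (L:ℝ) < ‖lam t‖ := lt_of_le_of_lt hLT hcase
      have hNpos : 0 < ‖lam t‖ := lt_of_le_of_lt hLnn hLN
      have hDpos : 0 < D := by
        rcases hD0.lt_or_eq with h | h
        · exact h
        · exfalso; rw [← h] at ih; nlinarith
      -- the maximizer is on the boundary
      have hvE : ‖γ t - δ t‖ = D := by
        by_contra h
        have hvlt : ‖γ t - δ t‖ < D := lt_of_le_of_ne hvD h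
        set ε : ℝ := (D - ‖γ t - δ t‖) / ‖lam t‖ with hεdef
        have hεpos : 0 < ε := div_pos (by linarith) hNpos
        have hgmem : γ t + ε • lam t ∈ closedBall (δ t) D := by
          rw [mem_closedBall, dist_eq_norm]
          have h1 : γ t + ε • lam t - δ t = (γ t - δ t) + ε • lam t := by abel
          rw [h1]
          calc ‖(γ t - δ t) + ε • lam t‖ ≤ ‖γ t - δ t‖ + ‖ε • lam t‖ := norm_add_le _ _
            _ = ‖γ t - δ t‖ + ε * ‖lam t‖ := by
                rw [norm_smul, Real.norm_eq_abs, abs_of_pos hεpos]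
            _ = D := by rw [hεdef]; field_simp; ring
        have h2 := KI t _ hgmem
        rw [add_sub_cancel_left, real_inner_smul_right, real_inner_self_eq_norm_sq,
          norm_smul, Real.norm_eq_abs, abs_of_pos hεpos] at h2
        nlinarith [mul_pos (mul_pos hεpos hNpos) (sub_pos.2 hLN)]
      -- Lemma A: subgradient-type bound for inward directions
      have hA : ∀ u : EuclideanSpace ℝ (Fin d), ⟪u, γ t - δ t⟫ ≤ 0 →
          ⟪lam t, u⟫ ≤ (L:ℝ) * ‖u‖ := by
        intro u hu
        have key : ∀ τ : ℝ, 0 < τ →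
            ⟪lam t, u⟫ ≤ (L:ℝ) * ‖u‖ + τ * ((L:ℝ) * D + ⟪lam t, γ t - δ t⟫) := by
          intro τ hτ
          set w : EuclideanSpace ℝ (Fin d) := u - τ • (γ t - δ t) with hwdef
          have hwv : ⟪w, γ t - δ t⟫ < 0 := by
            rw [hwdef, inner_sub_left, real_inner_smul_left, real_inner_self_eq_norm_sq, hvE]
            nlinarith [mul_pos hτ (pow_pos hDpos 2)]
          have hwne : w ≠ 0 := by
            intro h0
            rw [h0, inner_zero_left] at hwv
            exact lt_irrefl _ hwv
          have hwn : 0 < ‖w‖ := norm_pos_iff.2 hwne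
          set ε : ℝ := (-2 * ⟪w, γ t - δ t⟫) / ‖w‖^2 with hεdef
          have hεpos : 0 < ε := by
            apply div_pos (by linarith) (by positivity)
          have hgmem : γ t + ε • w ∈ closedBall (δ t) D := by
            rw [mem_closedBall, dist_eq_norm]
            have h1 : γ t + ε • w - δ t = (γ t - δ t) + ε • w := by abel
            rw [h1]
            have h2 : ‖(γ t - δ t) + ε • w‖^2 = D^2 := by
              rw [norm_add_sq_real, real_inner_smul_right, norm_smul, Real.norm_eq_abs,
                abs_of_pos hεpos, real_inner_comm, hvE, hεdef]
              field_simp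
              ring
            have h3 : ‖(γ t - δ t) + ε • w‖ = D := by
              have := Real.sqrt_sq (norm_nonneg ((γ t - δ t) + ε • w))
              rw [h2] at this
              rw [← this, Real.sqrt_sq hD0]
            exact le_of_eq h3
          have h4 := KI t _ hgmem
          rw [add_sub_cancel_left, real_inner_smul_right, norm_smul, Real.norm_eq_abs,
            abs_of_pos hεpos] at h4
          have h5 : ⟪lam t, w⟫ ≤ (L:ℝ) * ‖w‖ := by
            have := mul_le_mul_of_nonneg_left h4 (le_of_lt (inv_pos.2 hεpos))
            rw [← mul_assoc, inv_mul_cancel₀ (ne_of_gt hεpos), one_mul] at this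
            nlinarith
          have h6 : ⟪lam t, u⟫ = ⟪lam t, w⟫ + τ * ⟪lam t, γ t - δ t⟫ := by
            rw [hwdef, inner_sub_right, real_inner_smul_right]; ring
          have h7 : ‖w‖ ≤ ‖u‖ + τ * D := by
            rw [hwdef]
            calc ‖u - τ • (γ t - δ t)‖ ≤ ‖u‖ + ‖τ • (γ t - δ t)‖ := norm_sub_le _ _
              _ = ‖u‖ + τ * ‖γ t - δ t‖ := by
                  rw [norm_smul, Real.norm_eq_abs, abs_of_pos hτ]
              _ = ‖u‖ + τ * D := by rw [hvE]
          nlinarith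
        set C : ℝ := (L:ℝ) * D + ⟪lam t, γ t - δ t⟫ with hCdef
        rcases le_or_gt C 0 with hC | hC
        · have := key 1 one_pos
          nlinarith
        · by_contra hcon
          push_neg at hcon
          have hτpos : 0 < (⟪lam t, u⟫ - (L:ℝ) * ‖u‖) / (2 * C) := by
            apply div_pos (by linarith) (by linarith)
          have := key _ hτpos
          have hτC : (⟪lam t, u⟫ - (L:ℝ) * ‖u‖) / (2 * C) * C
              = (⟪lam t, u⟫ - (L:ℝ) * ‖u‖) / 2 := by
            field_simp
          rw [hτC] at this
          linarith
      -- positivity of the inner product a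
      have hapos : 0 < ⟪lam t, γ t - δ t⟫ := by
        by_contra h
        push_neg at h
        have := hA (lam t) h
        rw [real_inner_self_eq_norm_sq] at this
        nlinarith
      set a : ℝ := ⟪lam t, γ t - δ t⟫ with hadef
      -- orthogonal decomposition: p ⊥ v
      set p : EuclideanSpace ℝ (Fin d) := lam t - (a / D^2) • (γ t - δ t) with hpdef
      have hpv : ⟪p, γ t - δ t⟫ = 0 := by
        rw [hpdef, inner_sub_left, real_inner_smul_left, real_inner_self_eq_norm_sq, hvE,
          ← hadef]
        field_simp; ring
      have hpL : ‖p‖ ≤ (L:ℝ) := by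
        have h1 := hA p (le_of_eq hpv)
        have h2 : ⟪lam t, p⟫ = ‖p‖^2 := by
          have h3 : lam t = p + (a / D^2) • (γ t - δ t) := by rw [hpdef]; abel
          have hpv' : ⟪γ t - δ t, p⟫ = (0:ℝ) := by rw [real_inner_comm]; exact hpv
          rw [h3, inner_add_left, real_inner_smul_left, hpv', real_inner_self_eq_norm_sq]
          ring
        rw [h2] at h1
        nlinarith [norm_nonneg p]
      -- Pythagoras
      have hpyth : ‖lam t‖^2 = ‖p‖^2 + (a / D^2)^2 * D^2 := by
        have h3 : lam t = p + (a / D^2) • (γ t - δ t) := by rw [hpdef]; abel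
        rw [h3, norm_add_sq_real, real_inner_smul_right, hpv, norm_smul, Real.norm_eq_abs]
        rw [mul_pow, sq_abs, hvE]
        ring
      -- lower bound on a
      have hTlt : T^2 < ‖lam t‖^2 := by nlinarith
      have haLB : η * D^2 / 2 ≤ a := by
        have h1 : (a / D^2)^2 * D^2 ≥ ‖lam t‖^2 - (L:ℝ)^2 := by
          nlinarith [norm_nonneg p, hpL, hpyth]
        have h2 : a^2 / D^2 ≥ (η*D)^2/4 := by
          have h3 : (a / D^2)^2 * D^2 = a^2 / D^2 := by field_simp
          rw [h3] at h1
          nlinarith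
        have h4 : a^2 ≥ (η * D^2 / 2)^2 := by
          have hD2 : 0 < D^2 := by positivity
          have := mul_le_mul_of_nonneg_right h2 hD2.le
          calc a^2 = a^2 / D^2 * D^2 := by field_simp
            _ ≥ (η*D)^2/4 * D^2 := by nlinarith
            _ = (η * D^2 / 2)^2 := by ring
        nlinarith [mul_nonneg hη.le (sq_nonneg D)]
      -- conclude no increase
      have hfin : ‖lam (t+1)‖^2 ≤ ‖lam t‖^2 := by
        rw [hsq, hvE]
        nlinarith [mul_le_mul hη2 haLB (by positivity) hη.le,
          mul_le_mul_of_nonneg_right hη2 hη1]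
      have : ‖lam (t+1)‖ ≤ ‖lam t‖ := by
        nlinarith [norm_nonneg (lam (t+1)), norm_nonneg (lam t)]
      linarith
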